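/- Picard existence with an integrable singular coefficient: let α ∈ [0,1), M ≥ 0, y₀ ∈ ℝ, and let F : (0,1] × ℝ → ℝ be continuous and satisfy |F(w,y) − F(w,z)| ≤ M w^{−α} |y − z| and |F(w,y₀)| ≤ M w^{−α} for all w ∈ (0,1] and y,z ∈ ℝ. Then there exists c ∈ (0,1] such that there is a unique continuous function y : [0,c] → ℝ with y(τ) = y₀ + ∫_0^τ F(w, y(w)) dw for all τ ∈ [0,c]. -/

import Mathlib

open MeasureTheory Set

/-- Picard existence with an integrable singular coefficient. -/
theorem picard_singular_coefficient
    (α M y₀ : ℝ) (hα0 : 0 ≤ α) (hα1 : α < 1) (hM : 0 ≤ M) (F : ℝ → ℝ → ℝ)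
    (hFc : ContinuousOn (fun p : ℝ × ℝ => F p.1 p.2) (Set.Ioc 0 1 ×ˢ Set.univ))
    (hLip : ∀ w ∈ Set.Ioc (0:ℝ) 1, ∀ y z : ℝ,
      |F w y - F w z| ≤ M * w ^ (-α) * |y - z|)
    (hbd : ∀ w ∈ Set.Ioc (0:ℝ) 1, |F w y₀| ≤ M * w ^ (-α)) :
    ∃ c ∈ Set.Ioc (0:ℝ) 1,
      (∃ y : ℝ → ℝ, ContinuousOn y (Set.Icc 0 c) ∧
        ∀ τ ∈ Set.Icc 0 c, y τ = y₀ + ∫ w in Set.Ioc 0 τ, F w (y w)) ∧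
      (∀ y z : ℝ → ℝ,
        ContinuousOn y (Set.Icc 0 c) →
        (∀ τ ∈ Set.Icc 0 c, y τ = y₀ + ∫ w in Set.Ioc 0 τ, F w (y w)) →
        ContinuousOn z (Set.Icc 0 c) →
        (∀ τ ∈ Set.Icc 0 c, z τ = y₀ + ∫ w in Set.Ioc 0 τ, F w (z w)) →
        Set.EqOn y z (Set.Icc 0 c)) := by
  -- choice of c
  set β : ℝ := 1 - α with hβ
  have hβ0 : 0 < β := by simp only [hβ]; linarith
  set x : ℝ := β / (2 * (M + 1)) with hx
  have hx0 : 0 < x := by positivity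
  set c : ℝ := min 1 (x ^ β⁻¹) with hc
  have hc0 : 0 < c := lt_min one_pos (Real.rpow_pos_of_pos hx0 _)
  have hc1 : c ≤ 1 := min_le_left _ _
  have hcb : c ^ β ≤ x := by
    calc c ^ β ≤ (x ^ β⁻¹) ^ β :=
          Real.rpow_le_rpow hc0.le (min_le_right _ _) hβ0.le
    _ = x := Real.rpow_inv_rpow hx0.le hβ0.ne'
  set q : ℝ := M * (c ^ β / β) with hq
  have hq0 : 0 ≤ q := by positivity
  have hqle : q ≤ 1 / 2 := by
    have h1 : c ^ β / β ≤ x / β := by gcongr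
    have h2 : q ≤ M * (x / β) := mul_le_mul_of_nonneg_left h1 hM
    have h3 : x / β = 1 / (2 * (M + 1)) := by
      rw [hx]; field_simp
    rw [h3] at h2
    have h4 : M * (1 / (2 * (M + 1))) ≤ 1 / 2 := by
      rw [mul_one_div, div_le_div_iff₀ (by positivity) (by norm_num : (0:ℝ) < 2)]
      nlinarith
    linarith
  refine ⟨c, ⟨hc0, hc1⟩, ?_⟩
  -- basic facts about the singular weight
  have hIocsub : Ioc (0:ℝ) c ⊆ Ioc (0:ℝ) 1 := Ioc_subset_Ioc_right hc1
  have hrpow_int : IntegrableOn (fun w : ℝ => w ^ (-α)) (Ioc 0 c) := by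
    have := intervalIntegral.intervalIntegrable_rpow' (a := 0) (b := c) (r := -α)
      (by linarith)
    exact (intervalIntegrable_iff_integrableOn_Ioc_of_le hc0.le).1 this
  have hrpow_val : ∫ w in Ioc (0:ℝ) c, w ^ (-α) = c ^ β / β := by
    rw [← intervalIntegral.integral_of_le hc0.le,
      integral_rpow (Or.inl (by linarith : (-1:ℝ) < -α)),
      Real.zero_rpow (by simp only [hβ] at hβ0 ⊢; intro h; rw [show -α + 1 = β by rw [hβ]; ring] at h; exact hβ0.ne' h)]
    rw [show -α + 1 = β by rw [hβ]; ring]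
    ring
  -- the space of continuous functions on [0, c]
  haveI : Nonempty (Icc (0:ℝ) c) := ⟨⟨0, le_refl 0, hc0.le⟩⟩
  set ext : C(Icc (0:ℝ) c, ℝ) → ℝ → ℝ :=
    fun f w => f (projIcc 0 c hc0.le w) with hext
  have hext_cont : ∀ f : C(Icc (0:ℝ) c, ℝ), Continuous (ext f) :=
    fun f => f.continuous.comp continuous_projIcc
  have hext_eq : ∀ (f : C(Icc (0:ℝ) c, ℝ)) (w : ℝ) (hw : w ∈ Icc (0:ℝ) c),
      ext f w = f ⟨w, hw⟩ := by
    intro f w hw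
    simp only [hext, projIcc_of_mem hc0.le hw]
  -- continuity and integrability of the integrand
  have hgc : ∀ f : C(Icc (0:ℝ) c, ℝ),
      ContinuousOn (fun w => F w (ext f w)) (Ioc 0 c) := by
    intro f
    have h2 : ContinuousOn (fun w : ℝ => (w, ext f w)) (Ioc 0 c) :=
      (continuous_id.prodMk (hext_cont f)).continuousOn
    exact hFc.comp h2 (fun w hw => ⟨hIocsub hw, trivial⟩)
  have hFbound : ∀ (v : ℝ) (w : ℝ), w ∈ Ioc (0:ℝ) c →
      |F w v| ≤ M * (1 + |v - y₀|) * w ^ (-α) := by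
    intro v w hw
    have hw1 := hIocsub hw
    have h1 := hLip w hw1 v y₀
    have h2 := hbd w hw1
    have h3 : |F w v| ≤ |F w v - F w y₀| + |F w y₀| := by
      have := abs_sub_abs_le_abs_sub (F w v) (F w y₀)
      have := abs_add_le (F w v - F w y₀) (F w y₀)
      calc |F w v| = |(F w v - F w y₀) + F w y₀| := by ring_nf
      _ ≤ |F w v - F w y₀| + |F w y₀| := abs_add_le _ _
    calc |F w v| ≤ M * w ^ (-α) * |v - y₀| + M * w ^ (-α) := by
          refine h3.trans (add_le_add h1 h2)
    _ = M * (1 + |v - y₀|) * w ^ (-α) := by ring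
  have hgi : ∀ f : C(Icc (0:ℝ) c, ℝ),
      IntegrableOn (fun w => F w (ext f w)) (Ioc 0 c) := by
    intro f
    set B : ℝ := dist f (ContinuousMap.const _ y₀) with hB
    apply Integrable.mono' ((hrpow_int.const_mul (M * (1 + B))))
    · exact (hgc f).aestronglyMeasurable measurableSet_Ioc
    · rw [ae_restrict_iff' measurableSet_Ioc]
      filter_upwards with w hw
      have h1 := hFbound (ext f w) w hw
      have h2 : |ext f w - y₀| ≤ B := by
        rw [hext_eq f w ⟨hw.1.le, hw.2⟩]
        simpa [Real.dist_eq] using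
          ContinuousMap.dist_apply_le_dist
            (f := f) (g := ContinuousMap.const _ y₀) ⟨w, hw.1.le, hw.2⟩
      have h3 : (0:ℝ) ≤ w ^ (-α) := Real.rpow_nonneg hw.1.le _
      rw [Real.norm_eq_abs]
      calc |F w (ext f w)| ≤ M * (1 + |ext f w - y₀|) * w ^ (-α) := h1
      _ ≤ M * (1 + B) * w ^ (-α) :=
        mul_le_mul_of_nonneg_right
          (mul_le_mul_of_nonneg_left (by linarith) hM) h3
  -- the Picard operator
  have hTc : ∀ f : C(Icc (0:ℝ) c, ℝ),
      ContinuousOn (fun τ => y₀ + ∫ w in Ioc (0:ℝ) τ, F w (ext f w)) (Icc 0 c) := by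
    intro f
    apply continuousOn_const.add
    apply intervalIntegral.continuousOn_primitive
    rw [integrableOn_Icc_iff_integrableOn_Ioc]
    exact hgi f
  set T : C(Icc (0:ℝ) c, ℝ) → C(Icc (0:ℝ) c, ℝ) :=
    fun f => ⟨_, (hTc f).restrict⟩ with hT
  have hT_apply : ∀ (f : C(Icc (0:ℝ) c, ℝ)) (t : Icc (0:ℝ) c),
      T f t = y₀ + ∫ w in Ioc (0:ℝ) (t:ℝ), F w (ext f w) := fun f t => rfl
  -- contraction estimate
  have hdist : ∀ f g : C(Icc (0:ℝ) c, ℝ), dist (T f) (T g) ≤ q * dist f g := by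
    intro f g
    rw [ContinuousMap.dist_le (by positivity)]
    intro t
    have htsub : Ioc (0:ℝ) (t:ℝ) ⊆ Ioc (0:ℝ) c := Ioc_subset_Ioc_right t.2.2
    have hif : IntegrableOn (fun w => F w (ext f w)) (Ioc 0 (t:ℝ)) :=
      (hgi f).mono_set htsub
    have hig : IntegrableOn (fun w => F w (ext g w)) (Ioc 0 (t:ℝ)) :=
      (hgi g).mono_set htsub
    have hmaj : IntegrableOn (fun w : ℝ => M * w ^ (-α) * dist f g) (Ioc 0 c) := by
      have := (hrpow_int.const_mul M).mul_const (dist f g)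
      unfold IntegrableOn
      simpa [mul_assoc, mul_comm, mul_left_comm] using this
    rw [hT_apply, hT_apply, Real.dist_eq]
    have hsub : (y₀ + ∫ w in Ioc (0:ℝ) (t:ℝ), F w (ext f w))
        - (y₀ + ∫ w in Ioc (0:ℝ) (t:ℝ), F w (ext g w))
        = ∫ w in Ioc (0:ℝ) (t:ℝ), (F w (ext f w) - F w (ext g w)) := by
      rw [integral_sub hif hig]; ring
    rw [hsub]
    have habs : |∫ w in Ioc (0:ℝ) (t:ℝ), (F w (ext f w) - F w (ext g w))|
        ≤ ∫ w in Ioc (0:ℝ) (t:ℝ), |F w (ext f w) - F w (ext g w)| := by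
      simpa [Real.norm_eq_abs] using
        norm_integral_le_integral_norm (μ := volume.restrict (Ioc (0:ℝ) (t:ℝ)))
          (fun w => F w (ext f w) - F w (ext g w))
    refine habs.trans ?_
    have hptw : ∀ w ∈ Ioc (0:ℝ) (t:ℝ),
        |F w (ext f w) - F w (ext g w)| ≤ M * w ^ (-α) * dist f g := by
      intro w hw
      have hw' := htsub hw
      have h1 := hLip w (hIocsub hw') (ext f w) (ext g w)
      have h2 : |ext f w - ext g w| ≤ dist f g := by
        rw [hext_eq f w ⟨hw'.1.le, hw'.2⟩, hext_eq g w ⟨hw'.1.le, hw'.2⟩]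
        simpa [Real.dist_eq] using
          ContinuousMap.dist_apply_le_dist (f := f) (g := g) ⟨w, hw'.1.le, hw'.2⟩
      have h3 : (0:ℝ) ≤ M * w ^ (-α) :=
        mul_nonneg hM (Real.rpow_nonneg hw'.1.le _)
      calc |F w (ext f w) - F w (ext g w)| ≤ M * w ^ (-α) * |ext f w - ext g w| := h1
      _ ≤ M * w ^ (-α) * dist f g := mul_le_mul_of_nonneg_left h2 h3
    have hstep1 : ∫ w in Ioc (0:ℝ) (t:ℝ), |F w (ext f w) - F w (ext g w)|
        ≤ ∫ w in Ioc (0:ℝ) (t:ℝ), M * w ^ (-α) * dist f g := by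
      refine setIntegral_mono_on ?_ (hmaj.mono_set htsub) measurableSet_Ioc hptw
      exact (hif.sub hig).abs
    have hstep2 : ∫ w in Ioc (0:ℝ) (t:ℝ), M * w ^ (-α) * dist f g
        ≤ ∫ w in Ioc (0:ℝ) c, M * w ^ (-α) * dist f g := by
      refine setIntegral_mono_set hmaj ?_ (HasSubset.Subset.eventuallyLE htsub)
      rw [Filter.EventuallyLE, ae_restrict_iff' measurableSet_Ioc]
      filter_upwards with w hw
      exact mul_nonneg (mul_nonneg hM (Real.rpow_nonneg hw.1.le _)) dist_nonneg
    have hstep3 : ∫ w in Ioc (0:ℝ) c, M * w ^ (-α) * dist f g = q * dist f g := by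
      have : ∀ w : ℝ, M * w ^ (-α) * dist f g = (M * dist f g) * w ^ (-α) := by
        intro w; ring
      simp_rw [this]
      rw [integral_const_mul, hrpow_val, hq]; ring
    linarith
  -- fixed point
  set K : NNReal := Real.toNNReal q with hK
  have hKq : (K : ℝ) = q := Real.coe_toNNReal q hq0
  have hKlt : K < 1 := by
    have h1 : (K : ℝ) < 1 := by rw [hKq]; linarith
    exact_mod_cast h1
  have hcontr : ContractingWith K T := by
    constructor
    · exact hKlt
    · apply LipschitzWith.of_dist_le_mul
      intro f g
      rw [hKq]
      exact hdist f g
  set ystar : C(Icc (0:ℝ) c, ℝ) := hcontr.fixedPoint T with hystar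
  have hfix : T ystar = ystar := hcontr.fixedPoint_isFixedPt
  constructor
  · -- existence
    refine ⟨ext ystar, (hext_cont ystar).continuousOn, ?_⟩
    intro τ hτ
    have h1 : ext ystar τ = ystar ⟨τ, hτ⟩ := hext_eq ystar τ hτ
    have h2 : T ystar ⟨τ, hτ⟩ = ystar ⟨τ, hτ⟩ := by rw [hfix]
    rw [h1, ← h2, hT_apply]
  · -- uniqueness
    intro y z hyc hy hzc hz
    set Y : C(Icc (0:ℝ) c, ℝ) := ⟨_, hyc.restrict⟩ with hY
    set Z : C(Icc (0:ℝ) c, ℝ) := ⟨_, hzc.restrict⟩ with hZ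
    have hYoff : ∀ w ∈ Ioc (0:ℝ) c, ext Y w = y w := by
      intro w hw
      rw [hext_eq Y w ⟨hw.1.le, hw.2⟩]; rfl
    have hZoff : ∀ w ∈ Ioc (0:ℝ) c, ext Z w = z w := by
      intro w hw
      rw [hext_eq Z w ⟨hw.1.le, hw.2⟩]; rfl
    have hTY : T Y = Y := by
      ext t
      rw [hT_apply]
      have : ∫ w in Ioc (0:ℝ) (t:ℝ), F w (ext Y w) = ∫ w in Ioc (0:ℝ) (t:ℝ), F w (y w) := by
        apply setIntegral_congr_fun measurableSet_Ioc
        intro w hw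
        show F w (ext Y w) = F w (y w)
        rw [hYoff w (Ioc_subset_Ioc_right t.2.2 hw)]
      rw [this]
      exact (hy (t : ℝ) t.2).symm
    have hTZ : T Z = Z := by
      ext t
      rw [hT_apply]
      have : ∫ w in Ioc (0:ℝ) (t:ℝ), F w (ext Z w) = ∫ w in Ioc (0:ℝ) (t:ℝ), F w (z w) := by
        apply setIntegral_congr_fun measurableSet_Ioc
        intro w hw
        show F w (ext Z w) = F w (z w)
        rw [hZoff w (Ioc_subset_Ioc_right t.2.2 hw)]
      rw [this]
      exact (hz (t : ℝ) t.2).symm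
    have hYZ : Y = Z := by
      have h1 := hdist Y Z
      rw [hTY, hTZ] at h1
      have h2 : (0:ℝ) ≤ dist Y Z := dist_nonneg
      have h3 : dist Y Z = 0 := by nlinarith
      exact dist_eq_zero.1 h3
    intro τ hτ
    have := congrFun (congrArg (fun f : C(Icc (0:ℝ) c, ℝ) => (f : Icc (0:ℝ) c → ℝ)) hYZ) ⟨τ, hτ⟩
    exact this
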